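/- Under consistency, sequential ignorability and positivity, the mean of the counterfactual Y_{1,M_0} equals the mediation functional: E[Y_{1,M_0}] = θ0 = Σ_{m∈𝒮, x∈𝒳, P(X=x)>0} E(Y | E=1, M=m, X=x) · P(M=m | E=0, X=x) · P(X=x). -/

import Mathlib

open MeasureTheory ProbabilityTheory

section Helpers

variable {Ω β : Type*} [MeasurableSpace Ω] [MeasurableSpace β]

/-- If `f ⫫ g` under a probability measure, then `∫_{g⁻¹T} f = (∫ f) * ν(g⁻¹T)`. -/
lemma indep_setIntegral {ν : Measure Ω} [IsProbabilityMeasure ν] {f : Ω → ℝ} {g : Ω → β}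
    (hindep : IndepFun f g ν) (hf : Integrable f ν) (hg : Measurable g)
    {T : Set β} (hT : MeasurableSet T) :
    ∫ ω in g ⁻¹' T, f ω ∂ν = (∫ ω, f ω ∂ν) * (ν (g ⁻¹' T)).toReal := by
  have hind : IndepFun f (fun ω => (T.indicator (fun _ => (1:ℝ))) (g ω)) ν :=
    hindep.comp measurable_id ((measurable_const (a := (1:ℝ))).indicator hT)
  have hgi : Integrable (fun ω => (T.indicator (fun _ => (1:ℝ))) (g ω)) ν := by
    have : (fun ω => (T.indicator (fun _ => (1:ℝ))) (g ω))
        = (g ⁻¹' T).indicator (fun _ => (1:ℝ)) := by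
      funext ω; by_cases h : g ω ∈ T <;> simp [Set.indicator, h]
    rw [this]
    exact (integrable_const (1:ℝ)).indicator (hg hT)
  have h1 := hind.integral_mul_eq_mul_integral hf.aestronglyMeasurable hgi.aestronglyMeasurable
  have h2 : (f * fun ω => (T.indicator (fun _ => (1:ℝ))) (g ω))
      = (g ⁻¹' T).indicator f := by
    funext ω; by_cases h : g ω ∈ T <;> simp [Set.indicator, h]
  have h3 : (fun ω => (T.indicator (fun _ => (1:ℝ))) (g ω))
      = (g ⁻¹' T).indicator (fun _ => (1:ℝ)) := by
    funext ω; by_cases h : g ω ∈ T <;> simp [Set.indicator, h]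
  rw [h2] at h1
  rw [h3] at h1
  rw [integral_indicator (hg hT)] at h1
  rw [integral_indicator_const _ (hg hT)] at h1
  simpa [mul_comm, Measure.real] using h1

lemma cond_setIntegral {μ : Measure Ω} [IsFiniteMeasure μ] {s : Set Ω}
    (f : Ω → ℝ) {t : Set Ω} (ht : MeasurableSet t) :
    ∫ ω in t, f ω ∂(μ[|s]) = (μ s).toReal⁻¹ * ∫ ω in t ∩ s, f ω ∂μ := by
  rw [ProbabilityTheory.cond, Measure.restrict_smul, integral_smul_measure,
    Measure.restrict_restrict ht, ENNReal.toReal_inv, smul_eq_mul]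

lemma cond_integral {μ : Measure Ω} [IsFiniteMeasure μ] {s : Set Ω}
    (f : Ω → ℝ) :
    ∫ ω, f ω ∂(μ[|s]) = (μ s).toReal⁻¹ * ∫ ω in s, f ω ∂μ := by
  have := cond_setIntegral (μ := μ) (s := s) f (t := Set.univ) MeasurableSet.univ
  simpa using this

lemma integrable_cond {μ : Measure Ω} {s : Set Ω} (hμs : μ s ≠ 0) {f : Ω → ℝ}
    (hf : Integrable f μ) : Integrable f (μ[|s]) := by
  rw [ProbabilityTheory.cond]
  exact (hf.restrict).smul_measure (ENNReal.inv_ne_top.mpr hμs)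

lemma indep_cond_setIntegral {μ : Measure Ω} [IsFiniteMeasure μ] {s : Set Ω}
    (hs : MeasurableSet s) (hμs : μ s ≠ 0) {f : Ω → ℝ} {g : Ω → β}
    (hindep : IndepFun f g (μ[|s])) (hf : Integrable f μ) (hg : Measurable g)
    {T : Set β} (hT : MeasurableSet T) :
    (∫ ω in g ⁻¹' T ∩ s, f ω ∂μ) * (μ s).toReal
      = (∫ ω in s, f ω ∂μ) * (μ (g ⁻¹' T ∩ s)).toReal := by
  haveI : IsProbabilityMeasure (μ[|s]) := cond_isProbabilityMeasure hμs
  have h := indep_setIntegral hindep (integrable_cond hμs hf) hg hT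
  rw [cond_setIntegral f (hg hT), cond_integral f, cond_apply hs,
    ENNReal.toReal_mul, ENNReal.toReal_inv, Set.inter_comm s (g ⁻¹' T)] at h
  have ha : (μ s).toReal ≠ 0 :=
    ENNReal.toReal_ne_zero.mpr ⟨hμs, measure_ne_top μ s⟩
  field_simp at h
  linear_combination h

end Helpers


/-- Conditional probability of `B` given the event `A`: `P(B ∩ A) / P(A)`. -/
noncomputable def cP {Ω : Type*} [MeasurableSpace Ω] (μ : Measure Ω) (B A : Set Ω) : ℝ :=
  (μ (B ∩ A)).toReal / (μ A).toReal

/-- Conditional expectation of `Y` given the event `A`: `E[Y·1_A] / P(A)`. -/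
noncomputable def cE {Ω : Type*} [MeasurableSpace Ω] (μ : Measure Ω) (Y : Ω → ℝ) (A : Set Ω) : ℝ :=
  (∫ ω in A, Y ω ∂μ) / (μ A).toReal

open Classical in
/-- The mediation functional
`θ0 = Σ_{m, x : P(X=x)>0} E(Y | E=1, M=m, X=x) · P(M=m | E=0, X=x) · P(X=x)`. -/
noncomputable def theta0 {Ω 𝒳 𝒮 : Type*} [MeasurableSpace Ω] [Fintype 𝒳] [Fintype 𝒮]
    (μ : Measure Ω) (X : Ω → 𝒳) (M : Ω → 𝒮) (E : Ω → Bool) (Y : Ω → ℝ) : ℝ :=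
  ∑ m : 𝒮, ∑ x ∈ Finset.univ.filter (fun x => μ (X ⁻¹' {x}) ≠ 0),
    cE μ Y (E ⁻¹' {true} ∩ M ⁻¹' {m} ∩ X ⁻¹' {x}) *
      cP μ (M ⁻¹' {m}) (E ⁻¹' {false} ∩ X ⁻¹' {x}) *
      (μ (X ⁻¹' {x})).toReal

/-- under consistency, sequential ignorability and positivity,
`E[Y_{1,M_0}] = θ0`. -/
theorem mediation_identification
    {Ω 𝒳 𝒮 : Type*} [MeasurableSpace Ω] [Fintype 𝒳] [Fintype 𝒮]
    [MeasurableSpace 𝒳] [MeasurableSingletonClass 𝒳]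
    [MeasurableSpace 𝒮] [MeasurableSingletonClass 𝒮]
    (μ : Measure Ω) [IsProbabilityMeasure μ]
    (X : Ω → 𝒳) (M : Ω → 𝒮) (E : Ω → Bool) (Y : Ω → ℝ)
    (hX : Measurable X) (hM : Measurable M) (hE : Measurable E)
    (hY : Integrable Y μ)
    -- counterfactuals: `Yc e m = Y_{e,m}` and `Mc e = M_e`
    (Yc : Bool → 𝒮 → Ω → ℝ) (Mc : Bool → Ω → 𝒮)
    (hYc : ∀ e m, Integrable (Yc e m) μ) (hMc : ∀ e, Measurable (Mc e))
    -- positivity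
    (hposE : ∀ (e : Bool) (x : 𝒳), μ (X ⁻¹' {x}) ≠ 0 → μ (E ⁻¹' {e} ∩ X ⁻¹' {x}) ≠ 0)
    (hposM : ∀ (m : 𝒮) (e : Bool) (x : 𝒳), μ (X ⁻¹' {x}) ≠ 0 →
      μ (M ⁻¹' {m} ∩ E ⁻¹' {e} ∩ X ⁻¹' {x}) ≠ 0)
    -- consistency
    (hconsM : ∀ e : Bool, ∀ᵐ ω ∂μ, E ω = e → Mc e ω = M ω)
    (hconsY : ∀ (e : Bool) (m : 𝒮), ∀ᵐ ω ∂μ, E ω = e → M ω = m → Yc e m ω = Y ω)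
    -- sequential ignorability (i): ((Y_{e',m'})_{m'}, M_e) ⫫ E | X
    (hSI1 : ∀ (e e' : Bool) (x : 𝒳), μ (X ⁻¹' {x}) ≠ 0 →
      IndepFun (fun ω => ((fun m => Yc e' m ω), Mc e ω)) E (μ[|X ⁻¹' {x}]))
    -- sequential ignorability (ii): Y_{e',m} ⫫ M | (E, X)
    (hSI2 : ∀ (e' e : Bool) (m : 𝒮) (x : 𝒳), μ (X ⁻¹' {x}) ≠ 0 →
      IndepFun (Yc e' m) M (μ[|E ⁻¹' {e} ∩ X ⁻¹' {x}])) :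
    ∫ ω, Yc true (Mc false ω) ω ∂μ = theta0 μ X M E Y := by
  
  classical
  -- abbreviations
  have msM : ∀ m : 𝒮, MeasurableSet (M ⁻¹' {m}) := fun m => hM (measurableSet_singleton m)
  have msX : ∀ x : 𝒳, MeasurableSet (X ⁻¹' {x}) := fun x => hX (measurableSet_singleton x)
  have msE : ∀ e : Bool, MeasurableSet (E ⁻¹' {e}) := fun e => hE (measurableSet_singleton e)
  have msMc : ∀ (e : Bool) (m : 𝒮), MeasurableSet (Mc e ⁻¹' {m}) :=
    fun e m => (hMc e) (measurableSet_singleton m)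
  have hfm_eq : ∀ m : 𝒮, (fun ω => if Mc false ω = m then Yc true m ω else 0)
      = (Mc false ⁻¹' {m}).indicator (Yc true m) := by
    intro m; funext ω; by_cases h : Mc false ω = m <;> simp [Set.indicator, h]
  have hfm_int : ∀ m : 𝒮,
      Integrable (fun ω => if Mc false ω = m then Yc true m ω else 0) μ := by
    intro m; rw [hfm_eq]; exact (hYc true m).indicator (msMc false m)
  -- Step A: decompose the integral over the value of `Mc false`
  have hA : ∫ ω, Yc true (Mc false ω) ω ∂μ
      = ∑ m : 𝒮, ∫ ω, (if Mc false ω = m then Yc true m ω else 0) ∂μ := by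
    rw [← integral_finset_sum _ (fun m _ => hfm_int m)]
    apply integral_congr_ae
    filter_upwards with ω
    simp [Finset.sum_ite_eq]
  rw [hA]
  unfold theta0
  refine Finset.sum_congr rfl (fun m _ => ?_)
  -- Step B: decompose each integral over the value of `X`
  have hB : ∫ ω, (if Mc false ω = m then Yc true m ω else 0) ∂μ
      = ∑ x : 𝒳, ∫ ω in X ⁻¹' {x}, (if Mc false ω = m then Yc true m ω else 0) ∂μ := by
    have hpt : ∀ ω, (if Mc false ω = m then Yc true m ω else 0)
        = ∑ x : 𝒳, (X ⁻¹' {x}).indicator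
            (fun ω => if Mc false ω = m then Yc true m ω else 0) ω := by
      intro ω
      rw [Finset.sum_eq_single (X ω)]
      · simp [Set.indicator]
      · intro b _ hb; simp [Set.indicator, Ne.symm hb]
      · intro h; exact absurd (Finset.mem_univ _) h
    calc ∫ ω, (if Mc false ω = m then Yc true m ω else 0) ∂μ
        = ∫ ω, ∑ x : 𝒳, (X ⁻¹' {x}).indicator
            (fun ω => if Mc false ω = m then Yc true m ω else 0) ω ∂μ := by
          apply integral_congr_ae; filter_upwards with ω; exact hpt ω
      _ = ∑ x : 𝒳, ∫ ω, (X ⁻¹' {x}).indicator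
            (fun ω => if Mc false ω = m then Yc true m ω else 0) ω ∂μ :=
          integral_finset_sum _ (fun x _ => (hfm_int m).indicator (msX x))
      _ = ∑ x : 𝒳, ∫ ω in X ⁻¹' {x}, (if Mc false ω = m then Yc true m ω else 0) ∂μ := by
          refine Finset.sum_congr rfl (fun x _ => integral_indicator (msX x))
  rw [hB]
  -- drop the terms with `μ (X ⁻¹' {x}) = 0`
  rw [← Finset.sum_subset (Finset.filter_subset (fun x => μ (X ⁻¹' {x}) ≠ 0) Finset.univ)
    (fun x _ hx => by
      have hx0 : μ (X ⁻¹' {x}) = 0 := by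
        by_contra h; exact hx (Finset.mem_filter.mpr ⟨Finset.mem_univ _, h⟩)
      rw [Measure.restrict_eq_zero.mpr hx0, integral_zero_measure])]
  refine Finset.sum_congr rfl (fun x hxmem => ?_)
  have hx : μ (X ⁻¹' {x}) ≠ 0 := (Finset.mem_filter.mp hxmem).2
  -- the main per-(m, x) computation
  set sX : Set Ω := X ⁻¹' {x} with hsXdef
  have hbne : ∀ e : Bool, μ (E ⁻¹' {e} ∩ sX) ≠ 0 := fun e => hposE e x hx
  have hcne : ∀ e : Bool, μ (M ⁻¹' {m} ∩ (E ⁻¹' {e} ∩ sX)) ≠ 0 := by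
    intro e
    rw [← Set.inter_assoc]
    exact hposM m e x hx
  have ha : (μ sX).toReal ≠ 0 := ENNReal.toReal_ne_zero.mpr ⟨hx, measure_ne_top μ _⟩
  have hb : ∀ e : Bool, (μ (E ⁻¹' {e} ∩ sX)).toReal ≠ 0 :=
    fun e => ENNReal.toReal_ne_zero.mpr ⟨hbne e, measure_ne_top μ _⟩
  have hc : ∀ e : Bool, (μ (M ⁻¹' {m} ∩ (E ⁻¹' {e} ∩ sX))).toReal ≠ 0 :=
    fun e => ENNReal.toReal_ne_zero.mpr ⟨hcne e, measure_ne_top μ _⟩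
  -- independence of `fm` and `E` given `X = x` (from SI1)
  have hφ : Measurable (fun p : (𝒮 → ℝ) × 𝒮 => if p.2 = m then p.1 m else 0) := by
    refine Measurable.ite ?_ ((measurable_pi_apply m).comp measurable_fst) measurable_const
    exact measurable_snd (measurableSet_singleton m)
  have hind1 : IndepFun (fun ω => if Mc false ω = m then Yc true m ω else 0) E (μ[|sX]) := by
    have h := (hSI1 false true x hx).comp hφ measurable_id
    exact h
  -- independence of `Yc true m` and `E` given `X = x` (from SI1)
  have hind5 : IndepFun (Yc true m) E (μ[|sX]) := by
    have h := (hSI1 false true x hx).comp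
      ((measurable_pi_apply m).comp measurable_fst) measurable_id
    exact h
  -- equation (1): switch `fm` to the arm `E = false`
  have eq1 := indep_cond_setIntegral (msX x) hx hind1 (hfm_int m) hE
    (measurableSet_singleton false)
  -- equation (3): on `{E = false}`, `Mc false = M` a.s.
  have eq3 : ∫ ω in E ⁻¹' {false} ∩ sX, (if Mc false ω = m then Yc true m ω else 0) ∂μ
      = ∫ ω in M ⁻¹' {m} ∩ (E ⁻¹' {false} ∩ sX), Yc true m ω ∂μ := by
    have h1 : ∫ ω in E ⁻¹' {false} ∩ sX, (if Mc false ω = m then Yc true m ω else 0) ∂μ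
        = ∫ ω in E ⁻¹' {false} ∩ sX, (M ⁻¹' {m}).indicator (Yc true m) ω ∂μ := by
      refine setIntegral_congr_ae ((msE false).inter (msX x)) ?_
      filter_upwards [hconsM false] with ω hω hmem
      have hEω : E ω = false := hmem.1
      rw [hω hEω]
      by_cases h : M ω = m <;> simp [Set.indicator, h]
    rw [h1, setIntegral_indicator (msM m), Set.inter_comm (E ⁻¹' {false} ∩ sX) (M ⁻¹' {m})]
  -- equations (2) for both arms: from SI2
  have eq2f := indep_cond_setIntegral ((msE false).inter (msX x)) (hbne false)
    (hSI2 true false m x hx) (hYc true m) hM (measurableSet_singleton m)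
  have eq2t := indep_cond_setIntegral ((msE true).inter (msX x)) (hbne true)
    (hSI2 true true m x hx) (hYc true m) hM (measurableSet_singleton m)
  -- equations (5) for both arms: from SI1
  have eq5f := indep_cond_setIntegral (msX x) hx hind5 (hYc true m) hE
    (measurableSet_singleton false)
  have eq5t := indep_cond_setIntegral (msX x) hx hind5 (hYc true m) hE
    (measurableSet_singleton true)
  -- equation (7): consistency of `Y`
  have eq7 : ∫ ω in M ⁻¹' {m} ∩ (E ⁻¹' {true} ∩ sX), Yc true m ω ∂μ
      = ∫ ω in M ⁻¹' {m} ∩ (E ⁻¹' {true} ∩ sX), Y ω ∂μ := by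
    refine setIntegral_congr_ae ((msM m).inter ((msE true).inter (msX x))) ?_
    filter_upwards [hconsY true m] with ω hω hmem
    exact hω hmem.2.1 hmem.1
  -- name the quantities
  set a : ℝ := (μ sX).toReal
  set b0 : ℝ := (μ (E ⁻¹' {false} ∩ sX)).toReal
  set b1 : ℝ := (μ (E ⁻¹' {true} ∩ sX)).toReal
  set c0 : ℝ := (μ (M ⁻¹' {m} ∩ (E ⁻¹' {false} ∩ sX))).toReal
  set c1 : ℝ := (μ (M ⁻¹' {m} ∩ (E ⁻¹' {true} ∩ sX))).toReal
  set T : ℝ := ∫ ω in sX, (if Mc false ω = m then Yc true m ω else 0) ∂μ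
  set I0 : ℝ := ∫ ω in M ⁻¹' {m} ∩ (E ⁻¹' {false} ∩ sX), Yc true m ω ∂μ
  set I1 : ℝ := ∫ ω in M ⁻¹' {m} ∩ (E ⁻¹' {true} ∩ sX), Yc true m ω ∂μ
  set J0 : ℝ := ∫ ω in E ⁻¹' {false} ∩ sX, Yc true m ω ∂μ
  set J1 : ℝ := ∫ ω in E ⁻¹' {true} ∩ sX, Yc true m ω ∂μ
  set K : ℝ := ∫ ω in sX, Yc true m ω ∂μ
  set LY : ℝ := ∫ ω in M ⁻¹' {m} ∩ (E ⁻¹' {true} ∩ sX), Y ω ∂μ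
  have hb0 : b0 ≠ 0 := hb false
  have hb1 : b1 ≠ 0 := hb true
  have hc0 : c0 ≠ 0 := hc false
  have hc1 : c1 ≠ 0 := hc true
  rw [eq3] at eq1
  -- eq1 : I0 * a = T * b0 ; eq2f : I0 * b0 = J0 * c0 ; eq5f : J0 * a = K * b0
  -- eq5t : J1 * a = K * b1 ; eq2t : I1 * b1 = J1 * c1 ; eq7 : I1 = LY
  have hT : T = I0 * a / b0 := by
    rw [eq_div_iff hb0]; linear_combination -eq1
  have hI0 : I0 = J0 * c0 / b0 := by
    rw [eq_div_iff hb0]; linear_combination eq2f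
  have hJ0 : J0 = K * b0 / a := by
    rw [eq_div_iff ha]; linear_combination eq5f
  have hK : K = J1 * a / b1 := by
    rw [eq_div_iff hb1]; linear_combination -eq5t
  have hJ1 : J1 = LY * b1 / c1 := by
    rw [eq_div_iff hc1]; linear_combination -eq2t + b1 * eq7
  -- rewrite the target sets
  have hset : E ⁻¹' {true} ∩ M ⁻¹' {m} ∩ X ⁻¹' {x}
      = M ⁻¹' {m} ∩ (E ⁻¹' {true} ∩ sX) := by
    rw [Set.inter_comm (E ⁻¹' {true}) (M ⁻¹' {m}), Set.inter_assoc, hsXdef]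
  unfold cE cP
  rw [hset]
  rw [hT, hI0, hJ0, hK, hJ1]
  field_simp
  field_simp [hc true, hb false]
  show LY * c0 * c1 * b0 = (c1 * b0 * LY) * c0
  ring
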